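/- Let α ∈ (0,1). Then C(α-1) = 0, i.e. ∫_0^{+∞} t^{-1-2α} ( χ_{(0,1)}(t)(1-t)^{α-1} + (1+t)^{α-1} - 2 ) dt = 0. -/

import Mathlib

set_option maxHeartbeats 1000000

open MeasureTheory Set

namespace Stmt1Aux

noncomputable def mx (t : ℝ) : ℝ := max (1 - t) 0
noncomputable def phiF (α t : ℝ) : ℝ := (2*α)⁻¹ * (t ^ (-(2*α)) * (2 - mx t ^ α - (1+t) ^ α))
noncomputable def phif (α t : ℝ) : ℝ := t ^ (-1 - 2*α) * (mx t ^ (α-1) + (1+t) ^ (α-1) - 2)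
noncomputable def phir (α t : ℝ) : ℝ := 2⁻¹ * (t ^ (-(2*α)) * ((1+t) ^ (α-1) - mx t ^ (α-1)))
noncomputable def qq (α u : ℝ) : ℝ := u ^ (-(2*α)) * (1-u) ^ (α-1)
noncomputable def gg (α t : ℝ) : ℝ := t ^ (-(2*α)) * (1+t) ^ (α-1)

lemma mx_of_lt {t : ℝ} (h : t < 1) : mx t = 1 - t := max_eq_left (by linarith)
lemma mx_of_le {t : ℝ} (h : t ≤ 1) : mx t = 1 - t := max_eq_left (by linarith)
lemma mx_of_ge {t : ℝ} (h : 1 ≤ t) : mx t = 0 := max_eq_right (by linarith)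

/-- MVT for rpow on a positive interval. -/
lemma mvt_rpow {c x y : ℝ} (hx : 0 < x) (hxy : x < y) :
    ∃ ξ ∈ Ioo x y, y ^ c - x ^ c = c * ξ ^ (c-1) * (y - x) := by
  have hcont : ContinuousOn (fun z : ℝ => z ^ c) (Icc x y) := by
    intro z hz
    exact (Real.continuousAt_rpow_const z c (Or.inl (ne_of_gt (lt_of_lt_of_le hx hz.1)))).continuousWithinAt
  have hderiv : ∀ z ∈ Ioo x y, HasDerivAt (fun z : ℝ => z ^ c) (c * z ^ (c-1)) z := by
    intro z hz
    have hz0 : z ≠ 0 := ne_of_gt (lt_of_lt_of_le hx hz.1.le)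
    exact Real.hasDerivAt_rpow_const (x := z) (p := c) (Or.inl hz0)
  obtain ⟨ξ, hξ, hval⟩ := exists_hasDerivAt_eq_slope (fun z : ℝ => z ^ c)
    (fun z => c * z ^ (c-1)) hxy hcont hderiv
  refine ⟨ξ, hξ, ?_⟩
  rw [eq_div_iff (by linarith : y - x ≠ 0)] at hval
  linarith [hval]

/-- difference bound for negative powers: `0 ≤ (1-t)^c - (1+t)^c ≤ (-c) * 2t * (1-t)^(c-1)`. -/
lemma pair_bound {c t : ℝ} (hc : c < 0) (h0 : 0 < t) (h1 : t < 1) :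
    0 ≤ (1-t) ^ c - (1+t) ^ c ∧ (1-t) ^ c - (1+t) ^ c ≤ (-c) * (2*t) * (1-t) ^ (c-1) := by
  have h1t : (0:ℝ) < 1 - t := by linarith
  constructor
  · have := Real.rpow_le_rpow_of_nonpos h1t (by linarith : (1-t) ≤ 1+t) hc.le
    linarith
  · obtain ⟨ξ, hξ, hval⟩ := mvt_rpow (c := c) h1t (by linarith : (1-t) < 1+t)
    have hle : ξ ^ (c-1) ≤ (1-t) ^ (c-1) :=
      Real.rpow_le_rpow_of_nonpos h1t hξ.1.le (by linarith)
    have h2 : (1-t) ^ c - (1+t) ^ c = (-c) * ξ ^ (c-1) * (2*t) := by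
      rw [show (1+t) - (1-t) = 2*t by ring] at hval; linarith
    rw [h2, mul_comm ((-c)) (ξ ^ (c-1)), mul_assoc]
    calc ξ ^ (c-1) * (-c * (2*t)) ≤ (1-t) ^ (c-1) * (-c * (2*t)) := by
          apply mul_le_mul_of_nonneg_right hle
          have : (0:ℝ) ≤ -c := by linarith
          positivity
      _ = -c * (2*t) * (1-t) ^ (c-1) := by ring

/-- MVT applied to `s ↦ (1-s)^c + (1+s)^c` on `[0,t]`. -/
lemma sum_mvt {c t : ℝ} (h0 : 0 < t) (h1 : t < 1) :
    ∃ ξ ∈ Ioo 0 t, (1-t) ^ c + (1+t) ^ c - 2 = t * c * ((1+ξ) ^ (c-1) - (1-ξ) ^ (c-1)) := by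
  set u : ℝ → ℝ := fun s => (1-s) ^ c + (1+s) ^ c with hu
  have hderiv : ∀ s ∈ Ioo 0 t, HasDerivAt u (c * ((1+s) ^ (c-1) - (1-s) ^ (c-1))) s := by
    intro s hs
    have hs1 : (1:ℝ) - s ≠ 0 := by intro h; have := hs.2; linarith
    have hs2 : (1:ℝ) + s ≠ 0 := by have := hs.1; positivity
    have d1 : HasDerivAt (fun s : ℝ => (1-s) ^ c) (c * (1-s) ^ (c-1) * (-1)) s := by
      exact (Real.hasDerivAt_rpow_const (x := 1-s) (p := c) (Or.inl hs1)).comp s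
        (((hasDerivAt_id s).const_sub 1))
    have d2 : HasDerivAt (fun s : ℝ => (1+s) ^ c) (c * (1+s) ^ (c-1) * 1) s := by
      exact (Real.hasDerivAt_rpow_const (x := 1+s) (p := c) (Or.inl hs2)).comp s
        ((hasDerivAt_id s).const_add 1)
    have := d1.add d2
    exact this.congr_deriv (by ring)
  have hcont : ContinuousOn u (Icc 0 t) := by
    intro s hs
    have hs1 : (1:ℝ) - s ≠ 0 := by intro h; have := hs.2; nlinarith
    have hs2 : (1:ℝ) + s ≠ 0 := by have := hs.1; positivity
    apply ContinuousWithinAt.add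
    · exact ((Real.continuousAt_rpow_const (1-s) c (Or.inl hs1)).comp
        (by continuity : Continuous fun s : ℝ => 1 - s).continuousAt).continuousWithinAt
    · exact ((Real.continuousAt_rpow_const (1+s) c (Or.inl hs2)).comp
        (by continuity : Continuous fun s : ℝ => 1 + s).continuousAt).continuousWithinAt
  obtain ⟨ξ, hξ, hval⟩ := exists_hasDerivAt_eq_slope u
    (fun s => c * ((1+s) ^ (c-1) - (1-s) ^ (c-1))) h0 hcont hderiv
  refine ⟨ξ, hξ, ?_⟩
  have hu0 : u 0 = 2 := by simp [hu, Real.one_rpow]; norm_num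
  have hut : u t = (1-t) ^ c + (1+t) ^ c := rfl
  rw [hut, hu0, sub_zero] at hval
  rw [eq_div_iff (ne_of_gt h0)] at hval
  linear_combination -hval


lemma rpow_le_eight {b c : ℝ} (hb : 1/2 ≤ b) (hb1 : b ≤ 1) (hc : -3 ≤ c) : b ^ c ≤ 8 := by
  have hb0 : (0:ℝ) < b := by linarith
  rcases le_or_gt c 0 with h | h
  · have h1 : b ^ c ≤ (1/2 : ℝ) ^ c := Real.rpow_le_rpow_of_nonpos (by norm_num) hb h
    have h2 : (1/2 : ℝ) ^ c ≤ (1/2 : ℝ) ^ (-3 : ℝ) :=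
      Real.rpow_le_rpow_of_exponent_ge (by norm_num) (by norm_num) hc
    have h3 : ((1/2 : ℝ)) ^ (-3 : ℝ) = 8 := by
      rw [show (-3:ℝ) = ((-3 : ℤ) : ℝ) by norm_num, Real.rpow_intCast]
      norm_num
    linarith
  · have := Real.rpow_le_one hb0.le hb1 h.le
    linarith

lemma G_bound {α t : ℝ} (h0 : 0 < α) (h1 : α < 1) (ht : 0 < t) (ht' : t ≤ 1/2) :
    |mx t ^ (α-1) + (1+t) ^ (α-1) - 2| ≤ 32 * (t*t) := by
  have htl : t < 1 := by linarith
  rw [mx_of_lt htl]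
  obtain ⟨ξ, hξ, hG⟩ := sum_mvt (c := α-1) ht htl
  rw [hG]
  have hp := pair_bound (c := α-2) (by linarith) hξ.1 (by linarith [hξ.2])
  have h8 : (1-ξ) ^ (α-2-1) ≤ 8 :=
    rpow_le_eight (by linarith [hξ.2]) (by linarith [hξ.1]) (by linarith)
  have hE : (0:ℝ) ≤ (1-ξ) ^ (α-2-1) := Real.rpow_nonneg (by linarith [hξ.2]) _
  have heq : t * (α-1) * ((1+ξ) ^ (α-1-1) - (1-ξ) ^ (α-1-1))
      = t * (1-α) * ((1-ξ) ^ (α-2) - (1+ξ) ^ (α-2)) := by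
    rw [show α-1-1 = α-2 by ring]; ring
  have ht1α : (0:ℝ) ≤ t * (1-α) := mul_nonneg ht.le (by linarith)
  rw [heq, abs_of_nonneg (mul_nonneg ht1α hp.1)]
  have ha : (0:ℝ) ≤ -(α-2) := by linarith
  have hb : (0:ℝ) ≤ 2*ξ := by linarith [hξ.1]
  have hX : (0:ℝ) ≤ -(α-2) * (2*ξ) * (1-ξ) ^ (α-2-1) :=
    mul_nonneg (mul_nonneg ha hb) hE
  have hb2 : -(α-2) * (2*ξ) * (1-ξ) ^ (α-2-1) ≤ 2 * (2*t) * 8 := by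
    have h1 : -(α-2) * (2*ξ) ≤ 2 * (2*t) :=
      mul_le_mul (by linarith) (by linarith [hξ.2]) hb (by norm_num)
    exact mul_le_mul h1 h8 hE (by linarith)
  calc t * (1-α) * ((1-ξ) ^ (α-2) - (1+ξ) ^ (α-2))
      ≤ t * (1-α) * (-(α-2) * (2*ξ) * (1-ξ) ^ (α-2-1)) :=
        mul_le_mul_of_nonneg_left hp.2 ht1α
    _ ≤ t * (2 * (2*t) * 8) := by
        apply mul_le_mul (by nlinarith) hb2 hX ht.le
    _ = 32 * (t*t) := by ring

lemma v_bound {α t : ℝ} (h0 : 0 < α) (h1 : α < 1) (ht : 0 < t) (ht' : t ≤ 1/2) :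
    |2 - mx t ^ α - (1+t) ^ α| ≤ 32 * (t*t) := by
  have htl : t < 1 := by linarith
  rw [mx_of_lt htl]
  obtain ⟨ξ, hξ, hG⟩ := sum_mvt (c := α) ht htl
  have heq : 2 - (1-t) ^ α - (1+t) ^ α = t * α * ((1-ξ) ^ (α-1) - (1+ξ) ^ (α-1)) := by
    linarith [hG]
  rw [heq]
  have hp := pair_bound (c := α-1) (by linarith) hξ.1 (by linarith [hξ.2])
  have h8 : (1-ξ) ^ (α-1-1) ≤ 8 :=
    rpow_le_eight (by linarith [hξ.2]) (by linarith [hξ.1]) (by linarith)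
  have hE : (0:ℝ) ≤ (1-ξ) ^ (α-1-1) := Real.rpow_nonneg (by linarith [hξ.2]) _
  have htα : (0:ℝ) ≤ t * α := mul_nonneg ht.le h0.le
  rw [abs_of_nonneg (mul_nonneg htα hp.1)]
  have ha : (0:ℝ) ≤ -(α-1) := by linarith
  have hb : (0:ℝ) ≤ 2*ξ := by linarith [hξ.1]
  have hX : (0:ℝ) ≤ -(α-1) * (2*ξ) * (1-ξ) ^ (α-1-1) :=
    mul_nonneg (mul_nonneg ha hb) hE
  have hb2 : -(α-1) * (2*ξ) * (1-ξ) ^ (α-1-1) ≤ 2 * (2*t) * 8 := by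
    have h1 : -(α-1) * (2*ξ) ≤ 2 * (2*t) :=
      mul_le_mul (by linarith) (by linarith [hξ.2]) hb (by norm_num)
    exact mul_le_mul h1 h8 hE (by linarith)
  calc t * α * ((1-ξ) ^ (α-1) - (1+ξ) ^ (α-1))
      ≤ t * α * (-(α-1) * (2*ξ) * (1-ξ) ^ (α-1-1)) :=
        mul_le_mul_of_nonneg_left hp.2 htα
    _ ≤ t * (2 * (2*t) * 8) := by
        apply mul_le_mul (by nlinarith) hb2 hX ht.le
    _ = 32 * (t*t) := by ring

lemma rcore_bound {α t : ℝ} (h0 : 0 < α) (h1 : α < 1) (ht : 0 < t) (ht' : t ≤ 1/2) :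
    |(1+t) ^ (α-1) - mx t ^ (α-1)| ≤ 16 * t := by
  have htl : t < 1 := by linarith
  rw [mx_of_lt htl]
  have hp := pair_bound (c := α-1) (by linarith) ht htl
  have h8 : (1-t) ^ (α-1-1) ≤ 8 :=
    rpow_le_eight (by linarith) (by linarith) (by linarith)
  have hE : (0:ℝ) ≤ (1-t) ^ (α-1-1) := Real.rpow_nonneg (by linarith) _
  rw [abs_sub_comm, abs_of_nonneg (by linarith [hp.1])]
  have hb2 : -(α-1) * (2*t) * (1-t) ^ (α-1-1) ≤ 1 * (2*t) * 8 := by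
    have h1 : -(α-1) * (2*t) ≤ 1 * (2*t) :=
      mul_le_mul_of_nonneg_right (by linarith) (by linarith)
    exact mul_le_mul h1 h8 hE (by linarith)
  calc (1-t) ^ (α-1) - (1+t) ^ (α-1) ≤ -(α-1) * (2*t) * (1-t) ^ (α-1-1) := hp.2
    _ ≤ 1 * (2*t) * 8 := hb2
    _ = 16 * t := by ring


lemma integrableOn_rpow_Ioc {c : ℝ} (hc : -1 < c) {a b : ℝ} (hab : a ≤ b) :
    IntegrableOn (fun t : ℝ => t ^ c) (Ioc a b) :=
  (intervalIntegrable_iff_integrableOn_Ioc_of_le hab).mp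
    (intervalIntegral.intervalIntegrable_rpow' hc)

lemma integrableOn_one_sub_rpow {c : ℝ} (hc : -1 < c) {a : ℝ} (ha : a ≤ 1) :
    IntegrableOn (fun t : ℝ => (1-t) ^ c) (Ioc a 1) := by
  have h := (intervalIntegral.intervalIntegrable_rpow' (a := 0) (b := 1-a) hc).comp_sub_left 1
  norm_num at h
  exact (intervalIntegrable_iff_integrableOn_Ioc_of_le ha).mp h.symm

lemma pieces_Ioi {f : ℝ → ℝ} (h1 : IntegrableOn f (Ioc 0 (1/2)))
    (h2 : IntegrableOn f (Ioc (1/2) 1)) (h3 : IntegrableOn f (Ioi 1)) :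
    IntegrableOn f (Ioi (0:ℝ)) := by
  have he : Ioi (0:ℝ) = Ioc 0 (1/2) ∪ (Ioc (1/2) 1 ∪ Ioi 1) := by
    rw [Ioc_union_Ioi_eq_Ioi (by norm_num : (1/2:ℝ) ≤ 1),
      Ioc_union_Ioi_eq_Ioi (by norm_num : (0:ℝ) ≤ 1/2)]
  rw [he]
  exact h1.union (h2.union h3)

lemma meas_phif (α : ℝ) : Measurable (phif α) := by unfold phif mx; fun_prop
lemma meas_phir (α : ℝ) : Measurable (phir α) := by unfold phir mx; fun_prop
lemma meas_gg (α : ℝ) : Measurable (gg α) := by unfold gg; fun_prop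
lemma meas_qq (α : ℝ) : Measurable (qq α) := by unfold qq; fun_prop

lemma rpow_add_one' {t : ℝ} (ht : t ≠ 0) (a b : ℝ) (h : b = a + 1) : t ^ a * t = t ^ b := by
  rw [h, Real.rpow_add_one ht]

lemma integrable_phif {α : ℝ} (h0 : 0 < α) (h1 : α < 1) :
    IntegrableOn (phif α) (Ioi (0:ℝ)) := by
  apply pieces_Ioi
  · apply Integrable.mono' ((integrableOn_rpow_Ioc (c := 1-2*α) (by linarith) (by norm_num)).const_mul 32)
      (meas_phif α).aestronglyMeasurable.restrict
    refine (ae_restrict_iff' measurableSet_Ioc).mpr (ae_of_all _ ?_)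
    intro t ht
    have htp : 0 < t := ht.1
    have hT : (0:ℝ) ≤ t ^ (-1-2*α) := Real.rpow_nonneg htp.le _
    have hG := G_bound h0 h1 htp ht.2
    calc ‖phif α t‖ = t ^ (-1-2*α) * |mx t ^ (α-1) + (1+t) ^ (α-1) - 2| := by
          rw [phif, norm_mul, Real.norm_eq_abs, Real.norm_eq_abs, abs_of_nonneg hT]
      _ ≤ t ^ (-1-2*α) * (32 * (t*t)) := mul_le_mul_of_nonneg_left hG hT
      _ = 32 * (t ^ (-1-2*α) * t * t) := by ring
      _ = 32 * t ^ (1-2*α) := by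
          rw [rpow_add_one' htp.ne' _ (-(2*α)) (by ring),
            rpow_add_one' htp.ne' _ (1-2*α) (by ring)]
  · have hconst : IntegrableOn (fun _ : ℝ => (24:ℝ)) (Ioc (1/2:ℝ) 1) :=
      integrableOn_const measure_Ioc_lt_top.ne
    have hg : IntegrableOn (fun t : ℝ => 8 * (1-t) ^ (α-1) + 24) (Ioc (1/2:ℝ) 1) :=
      ((integrableOn_one_sub_rpow (c := α-1) (by linarith) (by norm_num)).const_mul 8).add hconst
    apply Integrable.mono' hg (meas_phif α).aestronglyMeasurable.restrict
    refine (ae_restrict_iff' measurableSet_Ioc).mpr (ae_of_all _ ?_)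
    intro t ht
    have htp : (0:ℝ) < t := lt_trans (by norm_num) ht.1
    have hT : (0:ℝ) ≤ t ^ (-1-2*α) := Real.rpow_nonneg htp.le _
    have hT8 : t ^ (-1-2*α) ≤ 8 := rpow_le_eight ht.1.le ht.2 (by linarith)
    have hmx : mx t = 1 - t := mx_of_le ht.2
    have hA : (0:ℝ) ≤ (1-t) ^ (α-1) := Real.rpow_nonneg (by linarith [ht.2]) _
    have hB0 : (0:ℝ) ≤ (1+t) ^ (α-1) := Real.rpow_nonneg (by linarith) _
    have hB1 : (1+t) ^ (α-1) ≤ 1 :=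
      Real.rpow_le_one_of_one_le_of_nonpos (by linarith) (by linarith)
    have habs : |mx t ^ (α-1) + (1+t) ^ (α-1) - 2| ≤ (1-t) ^ (α-1) + 3 := by
      rw [hmx, abs_le]; constructor <;> nlinarith
    calc ‖phif α t‖ = t ^ (-1-2*α) * |mx t ^ (α-1) + (1+t) ^ (α-1) - 2| := by
          rw [phif, norm_mul, Real.norm_eq_abs, Real.norm_eq_abs, abs_of_nonneg hT]
      _ ≤ 8 * ((1-t) ^ (α-1) + 3) := by
          apply mul_le_mul hT8 habs (abs_nonneg _) (by norm_num)
      _ = 8 * (1-t) ^ (α-1) + 24 := by ring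
  · apply Integrable.mono' ((integrableOn_Ioi_rpow_of_lt (by linarith : -1-2*α < -1) one_pos).const_mul 3)
      (meas_phif α).aestronglyMeasurable.restrict
    refine (ae_restrict_iff' measurableSet_Ioi).mpr (ae_of_all _ ?_)
    intro t ht
    have htp : (0:ℝ) < t := lt_trans one_pos ht
    have hT : (0:ℝ) ≤ t ^ (-1-2*α) := Real.rpow_nonneg htp.le _
    have hmx : mx t ^ (α-1) = 0 := by
      rw [mx_of_ge (le_of_lt ht), Real.zero_rpow (by linarith : α-1 ≠ 0)]
    have hB0 : (0:ℝ) ≤ (1+t) ^ (α-1) := Real.rpow_nonneg (by linarith) _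
    have hB1 : (1+t) ^ (α-1) ≤ 1 :=
      Real.rpow_le_one_of_one_le_of_nonpos (by linarith) (by linarith)
    have habs : |mx t ^ (α-1) + (1+t) ^ (α-1) - 2| ≤ 3 := by
      rw [hmx, abs_le]; constructor <;> nlinarith
    calc ‖phif α t‖ = t ^ (-1-2*α) * |mx t ^ (α-1) + (1+t) ^ (α-1) - 2| := by
          rw [phif, norm_mul, Real.norm_eq_abs, Real.norm_eq_abs, abs_of_nonneg hT]
      _ ≤ t ^ (-1-2*α) * 3 := mul_le_mul_of_nonneg_left habs hT
      _ = 3 * t ^ (-1-2*α) := by ring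


lemma integrable_phir {α : ℝ} (h0 : 0 < α) (h1 : α < 1) :
    IntegrableOn (phir α) (Ioi (0:ℝ)) := by
  apply pieces_Ioi
  · apply Integrable.mono' ((integrableOn_rpow_Ioc (c := 1-2*α) (by linarith) (by norm_num)).const_mul 8)
      (meas_phir α).aestronglyMeasurable.restrict
    refine (ae_restrict_iff' measurableSet_Ioc).mpr (ae_of_all _ ?_)
    intro t ht
    have htp : 0 < t := ht.1
    have hT : (0:ℝ) ≤ t ^ (-(2*α)) := Real.rpow_nonneg htp.le _
    have hr := rcore_bound h0 h1 htp ht.2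
    calc ‖phir α t‖ = 2⁻¹ * (t ^ (-(2*α)) * |(1+t) ^ (α-1) - mx t ^ (α-1)|) := by
          rw [phir, norm_mul, norm_mul, Real.norm_eq_abs, Real.norm_eq_abs, Real.norm_eq_abs,
            abs_of_nonneg hT]; norm_num
      _ ≤ 2⁻¹ * (t ^ (-(2*α)) * (16 * t)) := by
          apply mul_le_mul_of_nonneg_left (mul_le_mul_of_nonneg_left hr hT) (by norm_num)
      _ = 8 * (t ^ (-(2*α)) * t) := by ring
      _ = 8 * t ^ (1-2*α) := by rw [rpow_add_one' htp.ne' _ (1-2*α) (by ring)]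
  · have hconst : IntegrableOn (fun _ : ℝ => (4:ℝ)) (Ioc (1/2:ℝ) 1) :=
      integrableOn_const measure_Ioc_lt_top.ne
    have hg : IntegrableOn (fun t : ℝ => 4 * (1-t) ^ (α-1) + 4) (Ioc (1/2:ℝ) 1) :=
      ((integrableOn_one_sub_rpow (c := α-1) (by linarith) (by norm_num)).const_mul 4).add hconst
    apply Integrable.mono' hg (meas_phir α).aestronglyMeasurable.restrict
    refine (ae_restrict_iff' measurableSet_Ioc).mpr (ae_of_all _ ?_)
    intro t ht
    have htp : (0:ℝ) < t := lt_trans (by norm_num) ht.1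
    have hT : (0:ℝ) ≤ t ^ (-(2*α)) := Real.rpow_nonneg htp.le _
    have hT8 : t ^ (-(2*α)) ≤ 8 := rpow_le_eight ht.1.le ht.2 (by linarith)
    have hmx : mx t = 1 - t := mx_of_le ht.2
    have hA : (0:ℝ) ≤ (1-t) ^ (α-1) := Real.rpow_nonneg (by linarith [ht.2]) _
    have hB0 : (0:ℝ) ≤ (1+t) ^ (α-1) := Real.rpow_nonneg (by linarith) _
    have hB1 : (1+t) ^ (α-1) ≤ 1 :=
      Real.rpow_le_one_of_one_le_of_nonpos (by linarith) (by linarith)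
    have habs : |(1+t) ^ (α-1) - mx t ^ (α-1)| ≤ 1 + (1-t) ^ (α-1) := by
      rw [hmx, abs_le]; constructor <;> nlinarith
    calc ‖phir α t‖ = 2⁻¹ * (t ^ (-(2*α)) * |(1+t) ^ (α-1) - mx t ^ (α-1)|) := by
          rw [phir, norm_mul, norm_mul, Real.norm_eq_abs, Real.norm_eq_abs, Real.norm_eq_abs,
            abs_of_nonneg hT]; norm_num
      _ ≤ 2⁻¹ * (8 * (1 + (1-t) ^ (α-1))) := by
          apply mul_le_mul_of_nonneg_left
            (mul_le_mul hT8 habs (abs_nonneg _) (by norm_num)) (by norm_num)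
      _ = 4 * (1-t) ^ (α-1) + 4 := by ring
  · apply Integrable.mono' (integrableOn_Ioi_rpow_of_lt (by linarith : -1-α < -1) one_pos)
      (meas_phir α).aestronglyMeasurable.restrict
    refine (ae_restrict_iff' measurableSet_Ioi).mpr (ae_of_all _ ?_)
    intro t ht
    have htp : (0:ℝ) < t := lt_trans one_pos ht
    have hT : (0:ℝ) ≤ t ^ (-(2*α)) := Real.rpow_nonneg htp.le _
    have hmx : mx t ^ (α-1) = 0 := by
      rw [mx_of_ge (le_of_lt ht), Real.zero_rpow (by linarith : α-1 ≠ 0)]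
    have hB0 : (0:ℝ) ≤ (1+t) ^ (α-1) := Real.rpow_nonneg (by linarith) _
    have hBt : (1+t) ^ (α-1) ≤ t ^ (α-1) :=
      Real.rpow_le_rpow_of_nonpos htp (by linarith) (by linarith)
    calc ‖phir α t‖ = 2⁻¹ * (t ^ (-(2*α)) * |(1+t) ^ (α-1) - mx t ^ (α-1)|) := by
          rw [phir, norm_mul, norm_mul, Real.norm_eq_abs, Real.norm_eq_abs, Real.norm_eq_abs,
            abs_of_nonneg hT]; norm_num
      _ ≤ 2⁻¹ * (t ^ (-(2*α)) * t ^ (α-1)) := by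
          apply mul_le_mul_of_nonneg_left _ (by norm_num)
          apply mul_le_mul_of_nonneg_left _ hT
          rw [hmx, sub_zero, abs_of_nonneg hB0]; exact hBt
      _ = 2⁻¹ * t ^ (-1-α) := by
          rw [← Real.rpow_add htp]; ring_nf
      _ ≤ t ^ (-1-α) := by
          have := Real.rpow_nonneg htp.le (-1-α); linarith

lemma integrable_gg {α ε : ℝ} (h0 : 0 < α) (h1 : α < 1) (he : 0 < ε) (he1 : ε < 1) :
    IntegrableOn (gg α) (Ioi ε) := by
  have hsplit : Ioi ε = Ioc ε 1 ∪ Ioi 1 := (Ioc_union_Ioi_eq_Ioi he1.le).symm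
  rw [hsplit]
  apply IntegrableOn.union
  · have hconst : IntegrableOn (fun _ : ℝ => ε ^ (-(2*α))) (Ioc ε 1) :=
      integrableOn_const measure_Ioc_lt_top.ne
    apply Integrable.mono' hconst (meas_gg α).aestronglyMeasurable.restrict
    refine (ae_restrict_iff' measurableSet_Ioc).mpr (ae_of_all _ ?_)
    intro t ht
    have htp : (0:ℝ) < t := lt_trans he ht.1
    have hT : (0:ℝ) ≤ t ^ (-(2*α)) := Real.rpow_nonneg htp.le _
    have hTe : t ^ (-(2*α)) ≤ ε ^ (-(2*α)) :=
      Real.rpow_le_rpow_of_nonpos he ht.1.le (by linarith)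
    have hB0 : (0:ℝ) ≤ (1+t) ^ (α-1) := Real.rpow_nonneg (by linarith) _
    have hB1 : (1+t) ^ (α-1) ≤ 1 :=
      Real.rpow_le_one_of_one_le_of_nonpos (by linarith) (by linarith)
    calc ‖gg α t‖ = t ^ (-(2*α)) * (1+t) ^ (α-1) := by
          rw [gg, norm_mul, Real.norm_eq_abs, Real.norm_eq_abs, abs_of_nonneg hT,
            abs_of_nonneg hB0]
      _ ≤ ε ^ (-(2*α)) * 1 := mul_le_mul hTe hB1 hB0 (Real.rpow_nonneg he.le _)
      _ = ε ^ (-(2*α)) := by ring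
  · apply Integrable.mono' (integrableOn_Ioi_rpow_of_lt (by linarith : -1-α < -1) one_pos)
      (meas_gg α).aestronglyMeasurable.restrict
    refine (ae_restrict_iff' measurableSet_Ioi).mpr (ae_of_all _ ?_)
    intro t ht
    have htp : (0:ℝ) < t := lt_trans one_pos ht
    have hT : (0:ℝ) ≤ t ^ (-(2*α)) := Real.rpow_nonneg htp.le _
    have hB0 : (0:ℝ) ≤ (1+t) ^ (α-1) := Real.rpow_nonneg (by linarith) _
    have hBt : (1+t) ^ (α-1) ≤ t ^ (α-1) :=
      Real.rpow_le_rpow_of_nonpos htp (by linarith) (by linarith)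
    calc ‖gg α t‖ = t ^ (-(2*α)) * (1+t) ^ (α-1) := by
          rw [gg, norm_mul, Real.norm_eq_abs, Real.norm_eq_abs, abs_of_nonneg hT,
            abs_of_nonneg hB0]
      _ ≤ t ^ (-(2*α)) * t ^ (α-1) := mul_le_mul_of_nonneg_left hBt hT
      _ = t ^ (-1-α) := by rw [← Real.rpow_add htp]; ring_nf

lemma integrable_qq {α δ : ℝ} (h0 : 0 < α) (h1 : α < 1) (hd : 0 < δ) :
    IntegrableOn (qq α) (Ioc δ 1) := by
  rcases le_or_gt 1 δ with h | h
  · rw [Ioc_eq_empty (by linarith)]; exact integrableOn_empty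
  apply Integrable.mono' ((integrableOn_one_sub_rpow (c := α-1) (by linarith) h.le).const_mul (δ ^ (-(2*α))))
    (meas_qq α).aestronglyMeasurable.restrict
  refine (ae_restrict_iff' measurableSet_Ioc).mpr (ae_of_all _ ?_)
  intro t ht
  have htp : (0:ℝ) < t := lt_trans hd ht.1
  have hT : (0:ℝ) ≤ t ^ (-(2*α)) := Real.rpow_nonneg htp.le _
  have hTe : t ^ (-(2*α)) ≤ δ ^ (-(2*α)) :=
    Real.rpow_le_rpow_of_nonpos hd ht.1.le (by linarith)
  have hA : (0:ℝ) ≤ (1-t) ^ (α-1) := Real.rpow_nonneg (by linarith [ht.2]) _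
  calc ‖qq α t‖ = t ^ (-(2*α)) * (1-t) ^ (α-1) := by
        rw [qq, norm_mul, Real.norm_eq_abs, Real.norm_eq_abs, abs_of_nonneg hT,
          abs_of_nonneg hA]
    _ ≤ δ ^ (-(2*α)) * (1-t) ^ (α-1) := mul_le_mul_of_nonneg_right hTe hA


lemma cont_rpow_alpha {α : ℝ} (h0 : 0 < α) : Continuous fun x : ℝ => x ^ α := by
  rw [continuous_iff_continuousAt]
  intro x
  exact Real.continuousAt_rpow_const x α (Or.inr h0.le)

lemma contOn_phiF {α : ℝ} (h0 : 0 < α) : ContinuousOn (phiF α) (Ioi (0:ℝ)) := by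
  apply ContinuousOn.mul continuousOn_const
  apply ContinuousOn.mul
  · intro t ht
    exact (Real.continuousAt_rpow_const t (-(2*α)) (Or.inl (ne_of_gt ht))).continuousWithinAt
  · apply ContinuousOn.sub
    apply ContinuousOn.sub continuousOn_const
    · exact ((cont_rpow_alpha h0).comp
        (((continuous_const.sub continuous_id).max continuous_const))).continuousOn
    · intro t ht
      exact ((Real.continuousAt_rpow_const (1+t) α (Or.inl (by have := ht.out; positivity))).comp
        ((continuous_const.add continuous_id).continuousAt)).continuousWithinAt

lemma hasDerivAt_one_sub_rpow {c t : ℝ} (h : (1:ℝ) - t ≠ 0) :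
    HasDerivAt (fun s : ℝ => (1-s) ^ c) (c * (1-t) ^ (c-1) * (-1)) t :=
  (Real.hasDerivAt_rpow_const (x := 1-t) (p := c) (Or.inl h)).comp t
    ((hasDerivAt_id t).const_sub 1)

lemma hasDerivAt_one_add_rpow {c t : ℝ} (h : (1:ℝ) + t ≠ 0) :
    HasDerivAt (fun s : ℝ => (1+s) ^ c) (c * (1+t) ^ (c-1) * 1) t :=
  (Real.hasDerivAt_rpow_const (x := 1+t) (p := c) (Or.inl h)).comp t
    ((hasDerivAt_id t).const_add 1)

lemma hasDerivAt_phiF {α t : ℝ} (h0 : 0 < α) (h1 : α < 1) (ht : 0 < t) (hne : t ≠ 1) :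
    HasDerivAt (phiF α) (phif α t + phir α t) t := by
  have hα : α ≠ 0 := h0.ne'
  have h1t : (1:ℝ) + t ≠ 0 := by positivity
  have d0 : HasDerivAt (fun s : ℝ => s ^ (-(2*α))) (-(2*α) * t ^ (-(2*α)-1)) t :=
    Real.hasDerivAt_rpow_const (Or.inl ht.ne')
  have e1 : t ^ (-(2*α)) = t ^ (-1-2*α) * t := (rpow_add_one' ht.ne' _ _ (by ring)).symm
  have e0 : t ^ (-(2*α)-1) = t ^ (-1-2*α) := by rw [show -(2*α)-1 = -1-2*α by ring]
  have d2 : HasDerivAt (fun s : ℝ => (1+s) ^ α) (α * (1+t) ^ (α-1) * 1) t :=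
    hasDerivAt_one_add_rpow h1t
  rcases lt_or_gt_of_ne hne with hlt | hgt
  · -- t < 1
    have h1s : (1:ℝ) - t ≠ 0 := by intro h; apply hne; linarith
    have d1 : HasDerivAt (fun s : ℝ => (1-s) ^ α) (α * (1-t) ^ (α-1) * (-1)) t :=
      hasDerivAt_one_sub_rpow h1s
    have dinner : HasDerivAt (fun s : ℝ => 2 - (1-s) ^ α - (1+s) ^ α)
        (0 - (α * (1-t) ^ (α-1) * (-1)) - α * (1+t) ^ (α-1) * 1) t :=
      ((hasDerivAt_const t 2).sub d1).sub d2
    have dbig : HasDerivAt (fun s : ℝ => (2*α)⁻¹ * (s ^ (-(2*α)) * (2 - (1-s) ^ α - (1+s) ^ α)))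
        ((2*α)⁻¹ * ((-(2*α) * t ^ (-(2*α)-1)) * (2 - (1-t) ^ α - (1+t) ^ α)
          + t ^ (-(2*α)) * (0 - (α * (1-t) ^ (α-1) * (-1)) - α * (1+t) ^ (α-1) * 1))) t :=
      (d0.mul dinner).const_mul _
    have heq : phiF α =ᶠ[nhds t] fun s : ℝ => (2*α)⁻¹ * (s ^ (-(2*α)) * (2 - (1-s) ^ α - (1+s) ^ α)) := by
      filter_upwards [Iio_mem_nhds hlt] with s hs
      rw [phiF, mx_of_lt hs]
    have := dbig.congr_of_eventuallyEq heq
    refine this.congr_deriv ?_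
    rw [phif, phir, mx_of_lt hlt, e0, e1,
      show (1-t) ^ α = (1-t) ^ (α-1) * (1-t) from (rpow_add_one' h1s _ _ (by ring)).symm,
      show (1+t) ^ α = (1+t) ^ (α-1) * (1+t) from (rpow_add_one' h1t _ _ (by ring)).symm]
    field_simp
    ring
  · -- t > 1
    have dinner : HasDerivAt (fun s : ℝ => 2 - (1+s) ^ α) (0 - α * (1+t) ^ (α-1) * 1) t :=
      (hasDerivAt_const t 2).sub d2
    have dbig : HasDerivAt (fun s : ℝ => (2*α)⁻¹ * (s ^ (-(2*α)) * (2 - (1+s) ^ α)))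
        ((2*α)⁻¹ * ((-(2*α) * t ^ (-(2*α)-1)) * (2 - (1+t) ^ α)
          + t ^ (-(2*α)) * (0 - α * (1+t) ^ (α-1) * 1))) t :=
      (d0.mul dinner).const_mul _
    have heq : phiF α =ᶠ[nhds t] fun s : ℝ => (2*α)⁻¹ * (s ^ (-(2*α)) * (2 - (1+s) ^ α)) := by
      filter_upwards [Ioi_mem_nhds hgt] with s hs
      rw [phiF, mx_of_ge (le_of_lt hs), Real.zero_rpow hα]
      ring_nf
    have := dbig.congr_of_eventuallyEq heq
    refine this.congr_deriv ?_
    rw [phif, phir, mx_of_ge (le_of_lt hgt), Real.zero_rpow (sub_ne_zero_of_ne (ne_of_lt h1)),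
      e0, e1,
      show (1+t) ^ α = (1+t) ^ (α-1) * (1+t) from (rpow_add_one' h1t _ _ (by ring)).symm]
    field_simp
    ring


lemma phiF_tendsto_atTop {α : ℝ} (h0 : 0 < α) (h1 : α < 1) :
    Filter.Tendsto (phiF α) Filter.atTop (nhds 0) := by
  have hT1 : Filter.Tendsto (fun M : ℝ => M ^ (-(2*α))) Filter.atTop (nhds 0) :=
    tendsto_rpow_neg_atTop (by positivity)
  have hT2 : Filter.Tendsto (fun M : ℝ => M ^ (-(2*α)) * (1+M) ^ α) Filter.atTop (nhds 0) := by
    have hg : Filter.Tendsto (fun M : ℝ => 2 ^ α * M ^ (-α)) Filter.atTop (nhds 0) := by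
      have := (tendsto_rpow_neg_atTop h0).const_mul ((2:ℝ) ^ α)
      simpa using this
    apply squeeze_zero_norm' _ hg
    filter_upwards [Filter.eventually_ge_atTop (1:ℝ)] with M hM
    have hMp : (0:ℝ) < M := lt_of_lt_of_le one_pos hM
    have hb1 : (0:ℝ) ≤ M ^ (-(2*α)) := Real.rpow_nonneg hMp.le _
    have hb2 : (0:ℝ) ≤ (1+M) ^ α := Real.rpow_nonneg (by linarith) _
    rw [Real.norm_eq_abs, abs_of_nonneg (mul_nonneg hb1 hb2)]
    have hle : (1+M) ^ α ≤ 2 ^ α * M ^ α := by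
      rw [← Real.mul_rpow (by norm_num) hMp.le]
      exact Real.rpow_le_rpow (by linarith) (by linarith) h0.le
    calc M ^ (-(2*α)) * (1+M) ^ α ≤ M ^ (-(2*α)) * (2 ^ α * M ^ α) :=
          mul_le_mul_of_nonneg_left hle hb1
      _ = 2 ^ α * M ^ (-α) := by
          rw [show M ^ (-(2*α)) * (2 ^ α * M ^ α) = 2 ^ α * (M ^ (-(2*α)) * M ^ α) by ring,
            ← Real.rpow_add hMp, show -(2*α) + α = -α by ring]
  have hfinal : Filter.Tendsto (fun M : ℝ => (2*α)⁻¹ * (2 * M ^ (-(2*α)) - M ^ (-(2*α)) * (1+M) ^ α))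
      Filter.atTop (nhds 0) := by
    have := ((hT1.const_mul 2).sub hT2).const_mul ((2*α)⁻¹)
    simpa using this
  apply hfinal.congr'
  filter_upwards [Filter.eventually_ge_atTop (1:ℝ)] with M hM
  rw [phiF, mx_of_ge hM, Real.zero_rpow h0.ne']
  ring

lemma phiF_tendsto_zero {α : ℝ} (h0 : 0 < α) (h1 : α < 1) :
    Filter.Tendsto (phiF α) (nhdsWithin 0 (Ioi 0)) (nhds 0) := by
  have hg : Filter.Tendsto (fun ε : ℝ => 32 * (2*α)⁻¹ * ε ^ (2-2*α)) (nhdsWithin 0 (Ioi 0)) (nhds 0) := by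
    have hc : Filter.Tendsto (fun ε : ℝ => ε ^ (2-2*α)) (nhdsWithin 0 (Ioi 0)) (nhds 0) := by
      have h' : Filter.Tendsto (fun x : ℝ => x ^ (2-2*α)) (nhdsWithin 0 (Ioi 0))
          (nhds ((0:ℝ) ^ (2-2*α))) :=
        (Real.continuousAt_rpow_const 0 (2-2*α) (Or.inr (by linarith))).tendsto.mono_left
          (nhdsWithin_le_nhds (s := Ioi (0:ℝ)))
      rwa [Real.zero_rpow (by intro h; linarith : (2:ℝ)-2*α ≠ 0)] at h'
    have := hc.const_mul (32 * (2*α)⁻¹)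
    simpa using this
  apply squeeze_zero_norm' _ hg
  filter_upwards [Ioo_mem_nhdsGT (by norm_num : (0:ℝ) < 1/2)] with ε hε
  have hεp : 0 < ε := hε.1
  have hε2 : ε ≤ 1/2 := hε.2.le
  have hT : (0:ℝ) ≤ ε ^ (-(2*α)) := Real.rpow_nonneg hεp.le _
  have hv := v_bound h0 h1 hεp hε2
  have h2α : (0:ℝ) ≤ (2*α)⁻¹ := by positivity
  calc ‖phiF α ε‖ = (2*α)⁻¹ * (ε ^ (-(2*α)) * |2 - mx ε ^ α - (1+ε) ^ α|) := by
        rw [phiF, norm_mul, norm_mul, Real.norm_eq_abs, Real.norm_eq_abs, Real.norm_eq_abs,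
          abs_of_nonneg hT, abs_of_nonneg h2α]
    _ ≤ (2*α)⁻¹ * (ε ^ (-(2*α)) * (32 * (ε * ε))) := by
        apply mul_le_mul_of_nonneg_left (mul_le_mul_of_nonneg_left hv hT) h2α
    _ = 32 * (2*α)⁻¹ * (ε ^ (-(2*α)) * ε * ε) := by ring
    _ = 32 * (2*α)⁻¹ * ε ^ (2-2*α) := by
        rw [rpow_add_one' hεp.ne' _ (1-2*α) (by ring), rpow_add_one' hεp.ne' _ (2-2*α) (by ring)]

lemma integral_Ioi_sum_eq {α ε : ℝ} (h0 : 0 < α) (h1 : α < 1) (he : 0 < ε) (he1 : ε < 1) :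
    ∫ t in Ioi ε, (phif α t + phir α t) = - phiF α ε := by
  have hsum_int : IntegrableOn (fun t => phif α t + phir α t) (Ioi (0:ℝ)) :=
    (integrable_phif h0 h1).add (integrable_phir h0 h1)
  have hint_ε : IntegrableOn (fun t => phif α t + phir α t) (Ioi ε) :=
    hsum_int.mono_set (Ioi_subset_Ioi he.le)
  have key : ∀ M : ℝ, 2 ≤ M →
      ∫ t in ε..M, (phif α t + phir α t) = phiF α M - phiF α ε := by
    intro M hM
    have hii1 : IntervalIntegrable (fun t => phif α t + phir α t) volume ε 1 := by
      rw [intervalIntegrable_iff_integrableOn_Ioc_of_le he1.le]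
      exact hsum_int.mono_set (fun x hx => lt_trans he hx.1)
    have hii2 : IntervalIntegrable (fun t => phif α t + phir α t) volume 1 M := by
      rw [intervalIntegrable_iff_integrableOn_Ioc_of_le (by linarith)]
      exact hsum_int.mono_set (fun x hx => lt_trans one_pos hx.1)
    have hftc1 : ∫ t in ε..1, (phif α t + phir α t) = phiF α 1 - phiF α ε := by
      apply intervalIntegral.integral_eq_sub_of_hasDeriv_right_of_le he1.le
        ((contOn_phiF h0).mono (fun x hx => lt_of_lt_of_le he hx.1))
        (fun x hx => (hasDerivAt_phiF h0 h1 (lt_trans he hx.1) (ne_of_lt hx.2)).hasDerivWithinAt)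
        hii1
    have hftc2 : ∫ t in (1:ℝ)..M, (phif α t + phir α t) = phiF α M - phiF α 1 := by
      apply intervalIntegral.integral_eq_sub_of_hasDeriv_right_of_le (by linarith)
        ((contOn_phiF h0).mono (fun x hx => lt_of_lt_of_le one_pos hx.1))
        (fun x hx => (hasDerivAt_phiF h0 h1 (lt_trans one_pos hx.1) (ne_of_gt hx.1)).hasDerivWithinAt)
        hii2
    rw [← intervalIntegral.integral_add_adjacent_intervals hii1 hii2, hftc1, hftc2]
    ring
  have hlim1 : Filter.Tendsto (fun M => ∫ t in ε..M, (phif α t + phir α t)) Filter.atTop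
      (nhds (∫ t in Ioi ε, (phif α t + phir α t))) :=
    intervalIntegral_tendsto_integral_Ioi ε hint_ε Filter.tendsto_id
  have hlim2 : Filter.Tendsto (fun M => ∫ t in ε..M, (phif α t + phir α t)) Filter.atTop
      (nhds (0 - phiF α ε)) := by
    apply Filter.Tendsto.congr' _ (((phiF_tendsto_atTop h0 h1).sub_const (phiF α ε)))
    filter_upwards [Filter.eventually_ge_atTop (2:ℝ)] with M hM
    exact (key M hM).symm
  have := tendsto_nhds_unique hlim1 hlim2
  rw [this]; ring


noncomputable def sb (t : ℝ) : ℝ := t / (1 + t)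

lemma sb_image {ε : ℝ} (he : 0 < ε) : sb '' (Ioi ε) = Ioo (sb ε) 1 := by
  ext u
  simp only [mem_image, mem_Ioi, mem_Ioo]
  constructor
  · rintro ⟨t, ht, rfl⟩
    have htp : 0 < t := lt_trans he ht
    have h1t : (0:ℝ) < 1 + t := by linarith
    have h1e : (0:ℝ) < 1 + ε := by linarith
    refine ⟨?_, ?_⟩
    · rw [sb, sb, div_lt_div_iff₀ h1e h1t]
      nlinarith
    · rw [sb, div_lt_one h1t]; linarith
  · rintro ⟨h1, h2⟩
    have h1e : (0:ℝ) < 1 + ε := by linarith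
    have hu0 : 0 < u := lt_trans (by rw [sb]; positivity : (0:ℝ) < sb ε) h1
    have h1u : (0:ℝ) < 1 - u := by linarith
    refine ⟨u / (1 - u), ?_, ?_⟩
    · rw [lt_div_iff₀ h1u]
      rw [sb, div_lt_iff₀ h1e] at h1
      nlinarith
    · rw [sb]
      have : 1 + u / (1-u) = 1 / (1-u) := by field_simp; ring
      rw [this]
      field_simp

lemma sb_hasDeriv {t : ℝ} (ht : (1:ℝ) + t ≠ 0) :
    HasDerivAt sb ((1 * (1+t) - t * 1) / (1+t)^2) t := by
  exact (hasDerivAt_id t).div ((hasDerivAt_id t).const_add 1) ht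

lemma sb_injOn {ε : ℝ} (he : 0 < ε) : InjOn sb (Ioi ε) := by
  intro a ha b hb hab
  have h1a : (0:ℝ) < 1 + a := by have := lt_trans he ha.out; linarith
  have h1b : (0:ℝ) < 1 + b := by have := lt_trans he hb.out; linarith
  rw [sb, sb, div_eq_div_iff h1a.ne' h1b.ne'] at hab
  nlinarith

lemma subst_gg {α ε : ℝ} (h0 : 0 < α) (h1 : α < 1) (he : 0 < ε) :
    ∫ u in Ioo (sb ε) 1, qq α u = ∫ t in Ioi ε, gg α t := by
  have hchg := integral_image_eq_integral_abs_deriv_smul (f := sb)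
    (f' := fun t => (1 * (1+t) - t * 1) / (1+t)^2) measurableSet_Ioi
    (fun x hx => (sb_hasDeriv (by have := lt_trans he hx.out; intro h; linarith)).hasDerivWithinAt)
    (sb_injOn he) (qq α)
  rw [sb_image he] at hchg
  rw [hchg]
  apply setIntegral_congr_fun measurableSet_Ioi
  intro t ht
  have htp : 0 < t := lt_trans he ht
  have h1t : (0:ℝ) < 1 + t := by linarith
  have hders : (1 * (1+t) - t * 1) / (1+t)^2 = ((1+t)^2)⁻¹ := by field_simp; ring
  have hsb1 : 1 - sb t = (1+t)⁻¹ := by rw [sb]; field_simp; ring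
  have e1 : sb t ^ (-(2*α)) = t ^ (-(2*α)) * (1+t) ^ (2*α) := by
    rw [sb, Real.div_rpow htp.le h1t.le, Real.rpow_neg h1t.le (2*α), div_eq_mul_inv, inv_inv]
  have e2 : ((1+t)⁻¹) ^ (α-1) = (1+t) ^ (1-α) := by
    rw [Real.inv_rpow h1t.le, ← Real.rpow_neg h1t.le, show -(α-1) = 1-α by ring]
  have e0 : (((1+t):ℝ)^2)⁻¹ = (1+t) ^ (-2:ℝ) := by
    rw [show (((1+t):ℝ)^2) = (1+t) ^ ((2:ℕ):ℝ) from (Real.rpow_natCast (1+t) 2).symm,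
      ← Real.rpow_neg h1t.le]
    norm_num
  have hpow : (1+t) ^ (-2:ℝ) * (1+t) ^ (2*α) * (1+t) ^ (1-α) = (1+t) ^ (α-1) := by
    rw [← Real.rpow_add h1t, ← Real.rpow_add h1t]
    congr 1
    ring
  simp only [smul_eq_mul, qq, gg, hders, hsb1, e1, e2, e0]
  rw [abs_of_nonneg (Real.rpow_nonneg h1t.le _)]
  linear_combination t ^ (-(2*α)) * hpow


noncomputable def mxp (α t : ℝ) : ℝ := t ^ (-(2*α)) * mx t ^ (α-1)

lemma integrable_mxp {α ε : ℝ} (h0 : 0 < α) (h1 : α < 1) (he : 0 < ε) (he1 : ε < 1) :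
    IntegrableOn (mxp α) (Ioi ε) := by
  have hsplit : Ioi ε = Ioc ε 1 ∪ Ioi 1 := (Ioc_union_Ioi_eq_Ioi he1.le).symm
  rw [hsplit]
  apply IntegrableOn.union
  · exact (integrable_qq h0 h1 he).congr_fun
      (fun t ht => by rw [qq, ← mx_of_le ht.2, mxp]) measurableSet_Ioc
  · exact (integrableOn_zero : IntegrableOn (fun _ : ℝ => (0:ℝ)) (Ioi (1:ℝ)) volume).congr_fun
      (fun t ht => by
        rw [mxp, mx_of_ge (le_of_lt ht), Real.zero_rpow (sub_ne_zero_of_ne (ne_of_lt h1)),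
          mul_zero]) measurableSet_Ioi

lemma integral_mxp {α ε : ℝ} (h0 : 0 < α) (h1 : α < 1) (he : 0 < ε) (he1 : ε < 1) :
    ∫ t in Ioi ε, mxp α t = ∫ u in Ioc ε 1, qq α u := by
  have hsplit : Ioi ε = Ioc ε 1 ∪ Ioi 1 := (Ioc_union_Ioi_eq_Ioi he1.le).symm
  have hint := integrable_mxp h0 h1 he he1
  rw [hsplit] at hint ⊢
  rw [setIntegral_union (Ioc_disjoint_Ioi le_rfl) measurableSet_Ioi
    (hint.mono_set subset_union_left) (hint.mono_set subset_union_right)]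
  have h2 : ∫ t in Ioi (1:ℝ), mxp α t = 0 := by
    rw [setIntegral_congr_fun measurableSet_Ioi (g := fun _ : ℝ => (0:ℝ))
      (fun t ht => by
        rw [mxp, mx_of_ge (le_of_lt ht), Real.zero_rpow (sub_ne_zero_of_ne (ne_of_lt h1)),
          mul_zero])]
    exact integral_zero _ _
  have h1' : ∫ t in Ioc ε 1, mxp α t = ∫ u in Ioc ε 1, qq α u :=
    setIntegral_congr_fun measurableSet_Ioc
      (fun t ht => by rw [mxp, qq, ← mx_of_le ht.2])
  rw [h2, h1']
  ring

lemma sb_lt {ε : ℝ} (he : 0 < ε) : sb ε < ε := by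
  rw [sb, div_lt_iff₀ (by linarith)]
  nlinarith

lemma sb_pos {ε : ℝ} (he : 0 < ε) : 0 < sb ε := by
  rw [sb]; positivity

lemma phir_integral_eq {α ε : ℝ} (h0 : 0 < α) (h1 : α < 1) (he : 0 < ε) (he1 : ε < 1) :
    ∫ t in Ioi ε, phir α t = 2⁻¹ * ∫ u in Ioc (sb ε) ε, qq α u := by
  have hgg := integrable_gg h0 h1 he he1
  have hmxp := integrable_mxp h0 h1 he he1
  have step1 : ∫ t in Ioi ε, phir α t = 2⁻¹ * ((∫ t in Ioi ε, gg α t) - ∫ t in Ioi ε, mxp α t) := by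
    rw [← integral_sub hgg hmxp, ← MeasureTheory.integral_const_mul]
    apply setIntegral_congr_fun measurableSet_Ioi
    intro t ht
    simp only [phir, gg, mxp]
    ring
  rw [step1, ← subst_gg h0 h1 he, integral_mxp h0 h1 he he1]
  have hsbe : sb ε < ε := sb_lt he
  have hsbp : 0 < sb ε := sb_pos he
  have hsplit : Ioc (sb ε) ε ∪ Ioo ε 1 = Ioo (sb ε) 1 := Ioc_union_Ioo_eq_Ioo hsbe.le he1
  have hq1 : IntegrableOn (qq α) (Ioc (sb ε) ε) :=
    (integrable_qq h0 h1 hsbp).mono_set (Ioc_subset_Ioc_right he1.le)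
  have hq2 : IntegrableOn (qq α) (Ioo ε 1) :=
    (integrable_qq h0 h1 hsbp).mono_set
      (fun x hx => ⟨lt_trans hsbe hx.1, hx.2.le⟩)
  have hdisj : Disjoint (Ioc (sb ε) ε) (Ioo ε 1) :=
    Set.disjoint_left.mpr (fun x hx hx' => absurd hx.2 (not_le.mpr hx'.1))
  rw [← hsplit, setIntegral_union hdisj measurableSet_Ioo hq1 hq2,
    integral_Ioc_eq_integral_Ioo (f := qq α) (x := ε) (y := (1:ℝ))]
  ring

lemma tendsto_int_Ioi {h : ℝ → ℝ} (hint : IntegrableOn h (Ioi (0:ℝ))) :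
    Filter.Tendsto (fun ε => ∫ t in Ioi ε, h t) (nhdsWithin 0 (Ioi 0))
      (nhds (∫ t in Ioi (0:ℝ), h t)) := by
  have hIcc : IntegrableOn h (Icc (0:ℝ) 1) :=
    (hint.mono_set (fun x hx => hx.1)).congr_set_ae (Ioc_ae_eq_Icc (μ := volume)).symm
  have hcont := intervalIntegral.continuousOn_primitive (f := h) (a := 0) (b := 1)
    (μ := volume) hIcc
  have h00 : (∫ t in Ioc (0:ℝ) 0, h t) = 0 := by simp
  have htz : Filter.Tendsto (fun ε => ∫ t in Ioc (0:ℝ) ε, h t) (nhdsWithin 0 (Ioi 0)) (nhds 0) := by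
    have hc := (hcont 0 (by constructor <;> norm_num)).tendsto
    rw [h00] at hc
    apply hc.mono_left
    rw [← nhdsWithin_Ioo_eq_nhdsGT (by norm_num : (0:ℝ) < 1)]
    exact nhdsWithin_mono 0 Ioo_subset_Icc_self
  have hmain := Filter.Tendsto.sub
    (tendsto_const_nhds (x := ∫ t in Ioi (0:ℝ), h t) (f := nhdsWithin 0 (Ioi 0))) htz
  rw [sub_zero] at hmain
  apply hmain.congr'
  filter_upwards [Ioo_mem_nhdsGT (by norm_num : (0:ℝ) < 1)] with ε hε
  have hsplit : Ioi (0:ℝ) = Ioc 0 ε ∪ Ioi ε := (Ioc_union_Ioi_eq_Ioi hε.1.le).symm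
  have h1' : IntegrableOn h (Ioc 0 ε) := hint.mono_set (fun x hx => hx.1)
  have h2' : IntegrableOn h (Ioi ε) := hint.mono_set (Ioi_subset_Ioi hε.1.le)
  rw [hsplit] at hint ⊢
  rw [setIntegral_union (Ioc_disjoint_Ioi le_rfl) measurableSet_Ioi h1' h2']
  ring


lemma rpow_tendsto_zero {α : ℝ} (h0 : 0 < α) (h1 : α < 1) (c : ℝ) :
    Filter.Tendsto (fun ε : ℝ => c * ε ^ (2-2*α)) (nhdsWithin 0 (Ioi 0)) (nhds 0) := by
  have hc : Filter.Tendsto (fun ε : ℝ => ε ^ (2-2*α)) (nhdsWithin 0 (Ioi 0)) (nhds 0) := by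
    have h' : Filter.Tendsto (fun x : ℝ => x ^ (2-2*α)) (nhdsWithin 0 (Ioi 0))
        (nhds ((0:ℝ) ^ (2-2*α))) :=
      (Real.continuousAt_rpow_const 0 (2-2*α) (Or.inr (by linarith))).tendsto.mono_left
        (nhdsWithin_le_nhds (s := Ioi (0:ℝ)))
    rwa [Real.zero_rpow (by intro h; linarith : (2:ℝ)-2*α ≠ 0)] at h'
  have := hc.const_mul c
  simpa using this

lemma phir_integral_zero {α : ℝ} (h0 : 0 < α) (h1 : α < 1) :
    ∫ t in Ioi (0:ℝ), phir α t = 0 := by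
  have hint := integrable_phir h0 h1
  have limA := tendsto_int_Ioi hint
  have limB : Filter.Tendsto (fun ε => ∫ t in Ioi ε, phir α t) (nhdsWithin 0 (Ioi 0)) (nhds 0) := by
    apply squeeze_zero_norm' _ (rpow_tendsto_zero h0 h1 16)
    filter_upwards [Ioo_mem_nhdsGT (by norm_num : (0:ℝ) < 1/2)] with ε hε
    have hεp : 0 < ε := hε.1
    have hε2 : ε < 1/2 := hε.2
    have hε1 : ε < 1 := by linarith
    have hsbp := sb_pos hεp
    have hsbe := sb_lt hεp
    rw [phir_integral_eq h0 h1 hεp hε1]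
    have hhalf : ε/2 ≤ sb ε := by
      rw [sb, div_le_div_iff₀ (by norm_num) (by linarith : (0:ℝ) < 1+ε)]
      nlinarith
    have h2pow : (2:ℝ) ^ (2*α) ≤ 4 := by
      have h' : (2:ℝ) ^ (2*α) ≤ (2:ℝ) ^ ((2:ℕ):ℝ) :=
        Real.rpow_le_rpow_of_exponent_le one_le_two (by push_cast; linarith)
      rwa [Real.rpow_natCast, show ((2:ℝ)^(2:ℕ)) = 4 by norm_num] at h'
    have hC : ∀ u ∈ Ioc (sb ε) ε, ‖qq α u‖ ≤ 32 * ε ^ (-(2*α)) := by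
      intro u hu
      have hup : 0 < u := lt_trans hsbp hu.1
      have hu1 : u ≤ 1/2 := le_trans hu.2 hε2.le
      have hA : u ^ (-(2*α)) ≤ (ε/2) ^ (-(2*α)) :=
        Real.rpow_le_rpow_of_nonpos (by positivity) (le_trans hhalf hu.1.le) (by linarith)
      have hB : ((ε/2):ℝ) ^ (-(2*α)) = ε ^ (-(2*α)) * ((2:ℝ) ^ (2*α)) := by
        rw [Real.div_rpow hεp.le (by norm_num), Real.rpow_neg (by norm_num : (0:ℝ) ≤ 2),
          div_eq_mul_inv, inv_inv]
      have hAB : u ^ (-(2*α)) ≤ 4 * ε ^ (-(2*α)) := by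
        rw [hB] at hA
        have hεr : (0:ℝ) ≤ ε ^ (-(2*α)) := Real.rpow_nonneg hεp.le _
        calc u ^ (-(2*α)) ≤ ε ^ (-(2*α)) * ((2:ℝ) ^ (2*α)) := hA
          _ ≤ ε ^ (-(2*α)) * 4 := mul_le_mul_of_nonneg_left h2pow hεr
          _ = 4 * ε ^ (-(2*α)) := by ring
      have h8 : (1-u) ^ (α-1) ≤ 8 :=
        rpow_le_eight (by linarith) (by linarith) (by linarith)
      have hqn : ‖qq α u‖ = u ^ (-(2*α)) * (1-u) ^ (α-1) := by
        rw [qq, norm_mul, Real.norm_eq_abs, Real.norm_eq_abs,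
          abs_of_nonneg (Real.rpow_nonneg hup.le _),
          abs_of_nonneg (Real.rpow_nonneg (by linarith) _)]
      rw [hqn]
      calc u ^ (-(2*α)) * (1-u) ^ (α-1) ≤ (4 * ε ^ (-(2*α))) * 8 :=
            mul_le_mul hAB h8 (Real.rpow_nonneg (by linarith) _)
              (by positivity)
        _ = 32 * ε ^ (-(2*α)) := by ring
    have hnorm := norm_setIntegral_le_of_norm_le_const (μ := volume)
      (s := Ioc (sb ε) ε) measure_Ioc_lt_top hC
    have hvol : volume.real (Ioc (sb ε) ε) = ε - sb ε := by
      rw [Real.volume_real_Ioc_of_le (by linarith)]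
    have hvle : ε - sb ε ≤ ε * ε := by
      have heq2 : ε - sb ε = ε*ε/(1+ε) := by rw [sb]; field_simp; ring
      rw [heq2]
      exact div_le_self (by positivity) (by linarith)
    rw [hvol] at hnorm
    have hεr : (0:ℝ) ≤ ε ^ (-(2*α)) := Real.rpow_nonneg hεp.le _
    calc ‖2⁻¹ * ∫ u in Ioc (sb ε) ε, qq α u‖
        = 2⁻¹ * ‖∫ u in Ioc (sb ε) ε, qq α u‖ := by
          rw [norm_mul, Real.norm_eq_abs (2⁻¹ : ℝ), abs_of_nonneg (by norm_num : (0:ℝ) ≤ 2⁻¹)]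
      _ ≤ 2⁻¹ * (32 * ε ^ (-(2*α)) * (ε - sb ε)) := by
          apply mul_le_mul_of_nonneg_left hnorm (by norm_num)
      _ ≤ 2⁻¹ * (32 * ε ^ (-(2*α)) * (ε * ε)) := by
          apply mul_le_mul_of_nonneg_left
            (mul_le_mul_of_nonneg_left hvle (by positivity)) (by norm_num)
      _ = 16 * (ε ^ (-(2*α)) * ε * ε) := by ring
      _ = 16 * ε ^ (2-2*α) := by
          rw [rpow_add_one' hεp.ne' _ (1-2*α) (by ring),
            rpow_add_one' hεp.ne' _ (2-2*α) (by ring)]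
  exact tendsto_nhds_unique limA limB

lemma phif_integral_zero {α : ℝ} (h0 : 0 < α) (h1 : α < 1) :
    ∫ t in Ioi (0:ℝ), phif α t = 0 := by
  have hf := integrable_phif h0 h1
  have hr := integrable_phir h0 h1
  have hsum : ∫ t in Ioi (0:ℝ), (phif α t + phir α t) = 0 := by
    have limA := tendsto_int_Ioi (hf.add hr)
    have limB : Filter.Tendsto (fun ε => ∫ t in Ioi ε, (phif α t + phir α t))
        (nhdsWithin 0 (Ioi 0)) (nhds 0) := by
      have hphiF : Filter.Tendsto (fun ε => - phiF α ε) (nhdsWithin 0 (Ioi 0)) (nhds 0) := by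
        have := (phiF_tendsto_zero h0 h1).neg
        simpa using this
      apply hphiF.congr'
      filter_upwards [Ioo_mem_nhdsGT (by norm_num : (0:ℝ) < 1)] with ε hε
      exact (integral_Ioi_sum_eq h0 h1 hε.1 hε.2).symm
    exact tendsto_nhds_unique limA limB
  rw [integral_add hf hr] at hsum
  rw [phir_integral_zero h0 h1] at hsum
  linarith

end Stmt1Aux

open Stmt1Aux in
/-- For `α ∈ (0,1)`, `C(α-1) = 0`. -/
theorem stmt_1 (α : ℝ) (hα : α ∈ Ioo (0:ℝ) 1) :
    ∫ t in Ioi (0:ℝ), t ^ (-1 - 2*α) *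
      ((Ioo (0:ℝ) 1).indicator (fun s => (1 - s) ^ (α - 1)) t + (1 + t) ^ (α - 1) - 2) = 0 := by
  obtain ⟨h0, h1⟩ := hα
  have heq : EqOn (fun t : ℝ => t ^ (-1 - 2*α) *
      ((Ioo (0:ℝ) 1).indicator (fun s => (1 - s) ^ (α - 1)) t + (1 + t) ^ (α - 1) - 2))
      (phif α) (Ioi (0:ℝ)) := by
    intro t ht
    rcases lt_or_ge t 1 with hlt | hge
    · have hmem : t ∈ Ioo (0:ℝ) 1 := ⟨ht.out, hlt⟩
      simp only [phif, mx_of_lt hlt]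
      rw [Set.indicator_of_mem hmem]
    · have hnot : t ∉ Ioo (0:ℝ) 1 := fun h => absurd h.2 (not_lt.mpr hge)
      simp only [phif, mx_of_ge hge, indicator_of_notMem hnot,
        Real.zero_rpow (sub_ne_zero_of_ne (ne_of_lt h1))]
  rw [setIntegral_congr_fun measurableSet_Ioi heq]
  exact phif_integral_zero h0 h1
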